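/- For every 1 ≤ i ≤ n−1 and (a,b) ∈ ℂ² with (a,b) ≠ (0,0), the automorphism σ: x ↦ εx, y ↦ ε⁻¹y (ε a primitive n-th root of unity) descends to a ℂ-linear automorphism of the quotient ℂ[x,y]/I_i(a,b), and for each integer k with 0 ≤ k ≤ n−1 the eigenspace of this automorphism with eigenvalue ε^k is one-dimensional. (Hence H⁰(O_Z) is isomorphic to the regular representation ℂ[ℤ_n], so each I_i(a,b) is a ℤ_n-cluster.) -/

import Mathlib

open MvPolynomial


/-- The algebra automorphism `σ : x ↦ εx, y ↦ ε⁻¹y` of `ℂ[x,y]`. -/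
noncomputable def sigmaA (ε : ℂ) : MvPolynomial (Fin 2) ℂ →ₐ[ℂ] MvPolynomial (Fin 2) ℂ :=
  aeval ![C ε * X 0, C ε⁻¹ * X 1]

/-- The Ito–Nakamura ideal `I_i(a,b) = ⟨a·xⁱ − b·y^{n−i}, x^{i+1}, xy, y^{n+1−i}⟩`. -/
noncomputable def itoNak (n i : ℕ) (a b : ℂ) : Ideal (MvPolynomial (Fin 2) ℂ) :=
  Ideal.span
    {C a * X 0 ^ i - C b * X 1 ^ (n - i), X 0 ^ (i + 1), X 0 * X 1, X 1 ^ (n + 1 - i)}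

namespace INaux


noncomputable def em (n i : ℕ) (k : Fin n) : Fin 2 →₀ ℕ :=
  if (k : ℕ) ≤ i then Finsupp.single 0 (k : ℕ) else Finsupp.single 1 (n - (k : ℕ))

lemma em_apply0 (n i : ℕ) (k : Fin n) :
    em n i k 0 = if (k : ℕ) ≤ i then (k : ℕ) else 0 := by
  unfold em; split <;> simp [Finsupp.single_apply]

lemma em_apply1 (n i : ℕ) (k : Fin n) :
    em n i k 1 = if (k : ℕ) ≤ i then 0 else n - (k : ℕ) := by
  unfold em; split <;> simp [Finsupp.single_apply]

lemma le_iff2 (s t : Fin 2 →₀ ℕ) : s ≤ t ↔ s 0 ≤ t 0 ∧ s 1 ≤ t 1 := by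
  rw [Finsupp.le_def]
  constructor
  · exact fun h => ⟨h 0, h 1⟩
  · rintro ⟨h0, h1⟩ j; fin_cases j <;> assumption

noncomputable def L (n i : ℕ) (c : ℂ) :
    MvPolynomial (Fin 2) ℂ →ₗ[ℂ] (Fin n → ℂ) :=
  LinearMap.pi fun k =>
    lcoeff ℂ (em n i k) +
      if (k : ℕ) = i then c • lcoeff ℂ (Finsupp.single 1 (n - i)) else 0

lemma L_apply (n i : ℕ) (c : ℂ) (p : MvPolynomial (Fin 2) ℂ) (k : Fin n) :
    L n i c p k = coeff (em n i k) p +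
      if (k : ℕ) = i then c * coeff (Finsupp.single 1 (n - i)) p else 0 := by
  simp only [L, LinearMap.pi_apply, LinearMap.add_apply, lcoeff_apply]
  split <;> simp

lemma Lgm (n i : ℕ) (c : ℂ) (g : MvPolynomial (Fin 2) ℂ) (s : Fin 2 →₀ ℕ) (r : ℂ)
    (k : Fin n) :
    L n i c (g * monomial s r) k =
      (if s ≤ em n i k then coeff (em n i k - s) g * r else 0) +
      if (k : ℕ) = i then
        c * (if s ≤ Finsupp.single 1 (n - i) then
          coeff (Finsupp.single 1 (n - i) - s) g * r else 0) else 0 := by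
  rw [L_apply, coeff_mul_monomial', coeff_mul_monomial']

lemma single_ne10 : ((1 : Fin 2)) ≠ 0 := by decide
lemma single_ne01 : ((0 : Fin 2)) ≠ 1 := by decide

lemma vanish_x (n i : ℕ) (c : ℂ) (g : MvPolynomial (Fin 2) ℂ) :
    L n i c (g * X 0 ^ (i + 1)) = 0 := by
  funext k
  rw [X_pow_eq_monomial, Lgm]
  have h1 : ¬ (Finsupp.single (0 : Fin 2) (i + 1) ≤ em n i k) := by
    rw [le_iff2]
    rintro ⟨h0, -⟩
    rw [Finsupp.single_eq_same, em_apply0] at h0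
    split_ifs at h0 <;> omega
  have h2 : ¬ (Finsupp.single (0 : Fin 2) (i + 1) ≤ Finsupp.single (1 : Fin 2) (n - i)) := by
    rw [le_iff2]
    rintro ⟨h0, -⟩
    rw [Finsupp.single_eq_same, Finsupp.single_eq_of_ne' single_ne10] at h0
    omega
  rw [if_neg h1, if_neg h2]
  simp

lemma vanish_xy (n i : ℕ) (c : ℂ) (g : MvPolynomial (Fin 2) ℂ) :
    L n i c (g * (X 0 * X 1)) = 0 := by
  funext k
  have hxy : (X 0 * X 1 : MvPolynomial (Fin 2) ℂ) =
      monomial (Finsupp.single 0 1 + Finsupp.single 1 1) 1 := by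
    rw [X, X, monomial_mul, one_mul]
  rw [hxy, Lgm]
  have h1 : ¬ (Finsupp.single (0 : Fin 2) 1 + Finsupp.single (1 : Fin 2) 1 ≤ em n i k) := by
    rw [le_iff2]
    rintro ⟨h0, h1⟩
    rw [Finsupp.add_apply, Finsupp.single_eq_same,
      Finsupp.single_eq_of_ne' single_ne10, em_apply0] at h0
    rw [Finsupp.add_apply, Finsupp.single_eq_same,
      Finsupp.single_eq_of_ne' single_ne01, em_apply1] at h1
    split_ifs at h0 h1 <;> omega
  have h2 : ¬ (Finsupp.single (0 : Fin 2) 1 + Finsupp.single (1 : Fin 2) 1 ≤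
      Finsupp.single (1 : Fin 2) (n - i)) := by
    rw [le_iff2]
    rintro ⟨h0, -⟩
    rw [Finsupp.add_apply, Finsupp.single_eq_same,
      Finsupp.single_eq_of_ne' single_ne10, Finsupp.single_eq_of_ne' single_ne10] at h0
    omega
  rw [if_neg h1, if_neg h2]
  simp

lemma vanish_y (n i : ℕ) (hn : 2 ≤ n) (h2 : i ≤ n - 1) (c : ℂ)
    (g : MvPolynomial (Fin 2) ℂ) :
    L n i c (g * X 1 ^ (n + 1 - i)) = 0 := by
  funext k
  rw [X_pow_eq_monomial, Lgm]
  have hk := k.isLt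
  have h1 : ¬ (Finsupp.single (1 : Fin 2) (n + 1 - i) ≤ em n i k) := by
    rw [le_iff2]
    rintro ⟨-, h1⟩
    rw [Finsupp.single_eq_same, em_apply1] at h1
    split_ifs at h1 <;> omega
  have h2' : ¬ (Finsupp.single (1 : Fin 2) (n + 1 - i) ≤ Finsupp.single (1 : Fin 2) (n - i)) := by
    rw [le_iff2]
    rintro ⟨-, h1⟩
    rw [Finsupp.single_eq_same, Finsupp.single_eq_same] at h1
    omega
  rw [if_neg h1, if_neg h2']
  simp

lemma vanish_rel (n i : ℕ) (hn : 2 ≤ n) (h2 : i ≤ n - 1) (a b : ℂ) (hb : b ≠ 0)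
    (hia : 1 ≤ i ∨ a = 0) (g : MvPolynomial (Fin 2) ℂ) :
    L n i (a / b) (g * (C a * X 0 ^ i - C b * X 1 ^ (n - i))) = 0 := by
  funext k
  have hk := k.isLt
  have hrel : (C a * X 0 ^ i - C b * X 1 ^ (n - i) : MvPolynomial (Fin 2) ℂ) =
      monomial (Finsupp.single 0 i) a - monomial (Finsupp.single 1 (n - i)) b := by
    rw [X_pow_eq_monomial, X_pow_eq_monomial, C_mul_monomial, C_mul_monomial,
      mul_one, mul_one]
  have hB1 : ¬ (Finsupp.single (1 : Fin 2) (n - i) ≤ em n i k) := by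
    rw [le_iff2]
    rintro ⟨-, h1⟩
    rw [Finsupp.single_eq_same, em_apply1] at h1
    split_ifs at h1 <;> omega
  rw [hrel, mul_sub, map_sub, Pi.sub_apply, Lgm, Lgm]
  rcases hia with hi1 | ha
  · have hA2 : ¬ (Finsupp.single (0 : Fin 2) i ≤ Finsupp.single (1 : Fin 2) (n - i)) := by
      rw [le_iff2]
      rintro ⟨h0, -⟩
      rw [Finsupp.single_eq_same, Finsupp.single_eq_of_ne' single_ne10] at h0
      omega
    by_cases hki : (k : ℕ) = i
    · have hek : em n i k = Finsupp.single (0 : Fin 2) i := by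
        unfold em
        rw [if_pos (le_of_eq hki), hki]
      rw [hek] at hB1 ⊢
      rw [if_pos (le_refl _), if_pos hki, if_neg hA2, if_neg hB1, if_pos hki,
        if_pos (le_refl _), tsub_self, tsub_self, mul_zero, add_zero, zero_add,
        Pi.zero_apply]
      field_simp
      ring
    · have hA1 : ¬ (Finsupp.single (0 : Fin 2) i ≤ em n i k) := by
        rw [le_iff2]
        rintro ⟨h0, -⟩
        rw [Finsupp.single_eq_same, em_apply0] at h0
        split_ifs at h0 <;> omega
      rw [if_neg hA1, if_neg hki, if_neg hB1, if_neg hki]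
      simp
  · simp only [ha, zero_div, mul_zero, zero_mul, ite_self, if_neg hB1, zero_add,
      add_zero, sub_self, Pi.zero_apply]

lemma fin2_decomp (d : Fin 2 →₀ ℕ) :
    d = Finsupp.single 0 (d 0) + Finsupp.single 1 (d 1) := by
  ext j; fin_cases j <;> simp [Finsupp.add_apply, Finsupp.single_apply]

lemma L_vanish (n i : ℕ) (hn : 2 ≤ n) (h2 : i ≤ n - 1) (a b : ℂ) (hb : b ≠ 0)
    (hia : 1 ≤ i ∨ a = 0) {h : MvPolynomial (Fin 2) ℂ} (hh : h ∈ itoNak n i a b) :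
    L n i (a / b) h = 0 := by
  let T : Ideal (MvPolynomial (Fin 2) ℂ) :=
    { carrier := {h | ∀ g, L n i (a / b) (g * h) = 0}
      add_mem' := fun hx hy g => by
        rw [mul_add, map_add, hx g, hy g, add_zero]
      zero_mem' := fun g => by rw [mul_zero, map_zero]
      smul_mem' := fun r x hx g => by
        rw [smul_eq_mul, ← mul_assoc]; exact hx (g * r) }
  have hsub : itoNak n i a b ≤ T := by
    rw [itoNak, Ideal.span_le]
    rintro x hx
    simp only [Set.mem_insert_iff, Set.mem_singleton_iff] at hx
    rcases hx with rfl | rfl | rfl | rfl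
    · exact fun g => vanish_rel n i hn h2 a b hb hia g
    · exact fun g => vanish_x n i _ g
    · exact fun g => vanish_xy n i _ g
    · exact fun g => vanish_y n i hn h2 _ g
  simpa using hsub hh 1

lemma em_eq_iff (n i : ℕ) (k j : Fin n) : em n i k = em n i j ↔ k = j := by
  constructor
  · intro hEq
    have h0 := DFunLike.congr_fun hEq (0 : Fin 2)
    have h1 := DFunLike.congr_fun hEq (1 : Fin 2)
    rw [em_apply0, em_apply0] at h0
    rw [em_apply1, em_apply1] at h1
    have hk := k.isLt; have hj := j.isLt
    apply Fin.ext
    split_ifs at h0 h1 <;> omega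
  · rintro rfl; rfl

lemma em_ne_single (n i : ℕ) (hn : 2 ≤ n) (h2 : i ≤ n - 1) (k : Fin n) :
    em n i k ≠ Finsupp.single (1 : Fin 2) (n - i) := by
  intro hEq
  have h1 := DFunLike.congr_fun hEq (1 : Fin 2)
  rw [em_apply1, Finsupp.single_eq_same] at h1
  have hk := k.isLt
  split_ifs at h1 <;> omega

lemma L_mono (n i : ℕ) (hn : 2 ≤ n) (h2 : i ≤ n - 1) (c : ℂ) (k : Fin n) :
    L n i c (monomial (em n i k) 1) = Pi.single k 1 := by
  funext j
  rw [L_apply, coeff_monomial, coeff_monomial]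
  by_cases hjk : j = k
  · subst hjk
    rw [if_pos rfl, if_neg (em_ne_single n i hn h2 j), Pi.single_eq_same]
    simp
  · rw [if_neg (fun hEq => hjk ((em_eq_iff n i k j).1 hEq).symm),
      if_neg (em_ne_single n i hn h2 k), Pi.single_eq_of_ne hjk]
    simp

lemma mk_smul (I : Ideal (MvPolynomial (Fin 2) ℂ)) (r : ℂ) (x : MvPolynomial (Fin 2) ℂ) :
    Ideal.Quotient.mk I (r • x) = r • Ideal.Quotient.mk I x := by
  rw [← Ideal.Quotient.mkₐ_eq_mk ℂ I, map_smul]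

noncomputable def psi (n i : ℕ) (a b : ℂ) :
    (Fin n → ℂ) →ₗ[ℂ] (MvPolynomial (Fin 2) ℂ ⧸ itoNak n i a b) :=
  (Pi.basisFun ℂ (Fin n)).constr ℂ fun k =>
    Ideal.Quotient.mk (itoNak n i a b) (monomial (em n i k) 1)

lemma psi_apply (n i : ℕ) (a b : ℂ) (v : Fin n → ℂ) :
    psi n i a b v = Ideal.Quotient.mk (itoNak n i a b)
      (Finset.univ.sum fun k => v k • monomial (em n i k) 1) := by
  rw [psi, Module.Basis.constr_apply_fintype, map_sum]
  refine Finset.sum_congr rfl fun k _ => ?_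
  rw [mk_smul]
  simp [Pi.basisFun_equivFun]

lemma L_sum (n i : ℕ) (hn : 2 ≤ n) (h2 : i ≤ n - 1) (c : ℂ) (v : Fin n → ℂ) :
    L n i c (Finset.univ.sum fun k => v k • monomial (em n i k) 1) = v := by
  rw [map_sum]
  have : ∀ k : Fin n, L n i c (v k • monomial (em n i k) 1) = Pi.single k (v k) := by
    intro k
    rw [map_smul, L_mono n i hn h2 c]
    funext j
    by_cases hjk : j = k
    · subst hjk; simp
    · simp [Pi.single_eq_of_ne hjk]
  rw [Finset.sum_congr rfl fun k _ => this k]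
  exact Finset.univ_sum_single v

lemma psi_inj (n i : ℕ) (hn : 2 ≤ n) (h2 : i ≤ n - 1) (a b : ℂ) (hb : b ≠ 0)
    (hia : 1 ≤ i ∨ a = 0) : Function.Injective (psi n i a b) := by
  rw [← LinearMap.ker_eq_bot]
  rw [LinearMap.ker_eq_bot']
  intro v hv
  rw [psi_apply] at hv
  have hmem := Ideal.Quotient.eq_zero_iff_mem.1 hv
  have := L_vanish n i hn h2 a b hb hia hmem
  rwa [L_sum n i hn h2] at this

lemma psi_surj (n i : ℕ) (hn : 2 ≤ n) (h2 : i ≤ n - 1) (a b : ℂ) (hb : b ≠ 0) :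
    Function.Surjective (psi n i a b) := by
  have hbasis : ∀ k : Fin n, Ideal.Quotient.mk (itoNak n i a b) (monomial (em n i k) 1)
      ∈ LinearMap.range (psi n i a b) := fun k =>
    ⟨Pi.basisFun ℂ (Fin n) k, Module.Basis.constr_basis _ _ _ _⟩
  have hIk : ∀ h ∈ itoNak n i a b, Ideal.Quotient.mk (itoNak n i a b) h
      ∈ LinearMap.range (psi n i a b) := fun h hh => by
    rw [Ideal.Quotient.eq_zero_iff_mem.2 hh]; exact Submodule.zero_mem _
  have key : ∀ d : Fin 2 →₀ ℕ, Ideal.Quotient.mk (itoNak n i a b) (monomial d 1)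
      ∈ LinearMap.range (psi n i a b) := by
    intro d
    have hd : monomial d (1 : ℂ) = X 0 ^ (d 0) * X 1 ^ (d 1) := by
      rw [X_pow_eq_monomial, X_pow_eq_monomial, monomial_mul, one_mul, ← fin2_decomp d]
    by_cases ht : d 1 = 0
    · by_cases hsi : d 0 ≤ i
      · -- basis monomial xˢ
        have : d = em n i ⟨d 0, by omega⟩ := by
          unfold em
          rw [if_pos hsi]
          ext j; fin_cases j <;> simp [Finsupp.single_apply, ht]
        rw [this]; exact hbasis _
      · apply hIk
        have hre : d 0 = (d 0 - (i + 1)) + (i + 1) := by omega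
        rw [hd, ht, pow_zero, mul_one, hre, pow_add]
        exact Ideal.mul_mem_left _ _ (Ideal.subset_span (by simp [itoNak]))
    · by_cases hs : d 0 = 0
      · by_cases htn : d 1 < n - i
        · -- basis monomial yᵗ
          have : d = em n i ⟨n - d 1, by omega⟩ := by
            unfold em
            rw [if_neg (by simp only []; omega)]
            ext j; fin_cases j <;> simp [Finsupp.single_apply, hs] <;> omega
          rw [this]; exact hbasis _
        · by_cases hteq : d 1 = n - i
          · -- y^{n-i} ≡ (a/b)•xⁱ
            have hXmem : (X 1 ^ (n - i) - (a / b) • X 0 ^ i : MvPolynomial (Fin 2) ℂ)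
                ∈ itoNak n i a b := by
              have hid : (X 1 ^ (n - i) - (a / b) • X 0 ^ i : MvPolynomial (Fin 2) ℂ)
                  = (-b⁻¹) • (C a * X 0 ^ i - C b * X 1 ^ (n - i)) := by
                rw [smul_eq_C_mul, smul_eq_C_mul, mul_sub, ← mul_assoc, ← mul_assoc,
                  ← C_mul, ← C_mul]
                have c1 : (-b⁻¹) * a = -(a / b) := by field_simp
                have c2 : (-b⁻¹) * b = -1 := by field_simp
                rw [c1, c2, map_neg, map_neg, map_one]
                ring
              rw [hid]
              rw [smul_eq_C_mul]
              exact Ideal.mul_mem_left _ _ (Ideal.subset_span (by simp [itoNak]))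
            have hmk : Ideal.Quotient.mk (itoNak n i a b) (X 1 ^ (n - i))
                = Ideal.Quotient.mk (itoNak n i a b) ((a / b) • X 0 ^ i) :=
              Ideal.Quotient.eq.2 hXmem
            rw [hd, hs, pow_zero, one_mul, hteq, hmk, mk_smul]
            apply Submodule.smul_mem
            have hxi : (X 0 ^ i : MvPolynomial (Fin 2) ℂ) = monomial (em n i ⟨i, by omega⟩) 1 := by
              rw [X_pow_eq_monomial]
              congr 1
              unfold em
              rw [if_pos (le_refl i)]
            rw [hxi]; exact hbasis _
          · apply hIk
            have hre : d 1 = (d 1 - (n + 1 - i)) + (n + 1 - i) := by omega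
            rw [hd, hs, pow_zero, one_mul, hre, pow_add]
            exact Ideal.mul_mem_left _ _ (Ideal.subset_span (by simp [itoNak]))
      · apply hIk
        have hre0 : d 0 = (d 0 - 1) + 1 := by omega
        have hre1 : d 1 = (d 1 - 1) + 1 := by omega
        rw [hd, hre0, hre1, pow_add, pow_add, pow_one, pow_one]
        have : (X 0 ^ (d 0 - 1) * X 0 * (X 1 ^ (d 1 - 1) * X 1) : MvPolynomial (Fin 2) ℂ)
            = (X 0 ^ (d 0 - 1) * X 1 ^ (d 1 - 1)) * (X 0 * X 1) := by ring
        rw [this]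
        exact Ideal.mul_mem_left _ _ (Ideal.subset_span (by simp [itoNak]))
  intro q
  obtain ⟨f, rfl⟩ := Ideal.Quotient.mk_surjective q
  have hmem : Ideal.Quotient.mk (itoNak n i a b) f ∈ LinearMap.range (psi n i a b) := by
    induction f using MvPolynomial.induction_on' with
    | monomial d r =>
      have : monomial d r = r • monomial d (1 : ℂ) := by
        rw [smul_monomial, smul_eq_mul, mul_one]
      rw [this, mk_smul]
      exact Submodule.smul_mem _ _ (key d)
    | add p q hp hq =>
      rw [map_add]; exact Submodule.add_mem _ hp hq
  obtain ⟨v, hv⟩ := hmem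
  exact ⟨v, hv⟩

lemma sigma_X0 (ε : ℂ) : sigmaA ε (X 0) = C ε * X 0 := by
  simp [sigmaA]

lemma sigma_X1 (ε : ℂ) : sigmaA ε (X 1) = C ε⁻¹ * X 1 := by
  simp [sigmaA]

lemma inv_pow_eq (n k : ℕ) (hk : k ≤ n) (ε : ℂ) (hε1 : ε ^ n = 1) :
    (ε⁻¹) ^ (n - k) = ε ^ k := by
  rw [inv_pow]
  symm
  apply eq_inv_of_mul_eq_one_left
  rw [← pow_add]
  rwa [show k + (n - k) = n by omega]

lemma sigma_mono (n i : ℕ) (hn : 2 ≤ n) (h2 : i ≤ n - 1) (ε : ℂ) (hε1 : ε ^ n = 1)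
    (k : Fin n) :
    sigmaA ε (monomial (em n i k) 1) = (ε ^ (k : ℕ)) • monomial (em n i k) 1 := by
  have hk := k.isLt
  unfold em
  split
  · rw [← X_pow_eq_monomial, map_pow, sigma_X0, mul_pow, ← C_pow, smul_eq_C_mul]
  · rw [← X_pow_eq_monomial, map_pow, sigma_X1, mul_pow, ← C_pow, smul_eq_C_mul,
      inv_pow_eq n (k : ℕ) (by omega) ε hε1]

lemma sigma_ideal (n i : ℕ) (hn : 2 ≤ n) (h2 : i ≤ n - 1) (a b : ℂ) (ε : ℂ)
    (hε1 : ε ^ n = 1) {h : MvPolynomial (Fin 2) ℂ} (hh : h ∈ itoNak n i a b) :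
    sigmaA ε h ∈ itoNak n i a b := by
  have hle : itoNak n i a b ≤ Ideal.comap (sigmaA ε).toRingHom (itoNak n i a b) := by
    rw [itoNak, Ideal.span_le]
    rintro x hx
    simp only [Set.mem_insert_iff, Set.mem_singleton_iff] at hx
    have hgen : ∀ g ∈ ({C a * X 0 ^ i - C b * X 1 ^ (n - i), X 0 ^ (i + 1), X 0 * X 1,
        X 1 ^ (n + 1 - i)} : Set (MvPolynomial (Fin 2) ℂ)), g ∈ itoNak n i a b := fun g hg =>
      Ideal.subset_span hg
    rcases hx with rfl | rfl | rfl | rfl <;>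
      rw [SetLike.mem_coe, Ideal.mem_comap] <;>
      simp only [AlgHom.toRingHom_eq_coe, RingHom.coe_coe]
    · have hcalc : sigmaA ε (C a * X 0 ^ i - C b * X 1 ^ (n - i)) =
          C (ε ^ i) * (C a * X 0 ^ i - C b * X 1 ^ (n - i)) := by
        rw [map_sub, map_mul, map_mul, map_pow, map_pow, sigma_X0, sigma_X1,
          algHom_C, algHom_C, mul_pow, mul_pow, ← C_pow, ← C_pow,
          inv_pow_eq n i (by omega) ε hε1, MvPolynomial.algebraMap_eq]
        ring
      rw [hcalc]
      exact Ideal.mul_mem_left _ _ (hgen _ (by simp))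
    · have hcalc : sigmaA ε (X 0 ^ (i + 1)) = C (ε ^ (i + 1)) * X 0 ^ (i + 1) := by
        rw [map_pow, sigma_X0, mul_pow, ← C_pow]
      rw [hcalc]
      exact Ideal.mul_mem_left _ _ (hgen _ (by simp))
    · have hcalc : sigmaA ε (X 0 * X 1) = (C ε * C ε⁻¹) * (X 0 * X 1) := by
        rw [map_mul, sigma_X0, sigma_X1]; ring
      rw [hcalc]
      exact Ideal.mul_mem_left _ _ (hgen _ (by simp))
    · have hcalc : sigmaA ε (X 1 ^ (n + 1 - i)) =
          C ((ε⁻¹) ^ (n + 1 - i)) * X 1 ^ (n + 1 - i) := by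
        rw [map_pow, sigma_X1, mul_pow, ← C_pow]
      rw [hcalc]
      exact Ideal.mul_mem_left _ _ (hgen _ (by simp))
  exact hle hh

set_option maxHeartbeats 1000000 in
lemma core (n i : ℕ) (hn : 2 ≤ n) (h2 : i ≤ n - 1) (a b : ℂ) (hb : b ≠ 0)
    (hia : 1 ≤ i ∨ a = 0) (ε : ℂ) (hε : IsPrimitiveRoot ε n) :
    ∃ σbar : (MvPolynomial (Fin 2) ℂ ⧸ itoNak n i a b) ≃ₗ[ℂ]
        (MvPolynomial (Fin 2) ℂ ⧸ itoNak n i a b),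
      (∀ f : MvPolynomial (Fin 2) ℂ,
        σbar (Ideal.Quotient.mk (itoNak n i a b) f) =
          Ideal.Quotient.mk (itoNak n i a b) (sigmaA ε f)) ∧
      ∀ k : ℕ, k ≤ n - 1 →
        Module.finrank ℂ (Module.End.eigenspace (σbar.toLinearMap) (ε ^ k)) = 1 := by
  have hε1 : ε ^ n = 1 := hε.pow_eq_one
  have hεne : ε ≠ 0 := hε.ne_zero (by omega)
  -- the linear equivalence
  let e : (Fin n → ℂ) ≃ₗ[ℂ] (MvPolynomial (Fin 2) ℂ ⧸ itoNak n i a b) :=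
    LinearEquiv.ofBijective (psi n i a b)
      ⟨psi_inj n i hn h2 a b hb hia, psi_surj n i hn h2 a b hb⟩
  have he : ∀ v, e v = psi n i a b v := fun v => rfl
  -- the diagonal automorphism
  let D : (Fin n → ℂ) ≃ₗ[ℂ] (Fin n → ℂ) :=
    LinearEquiv.piCongrRight fun k =>
      LinearEquiv.smulOfNeZero ℂ ℂ (ε ^ (k : ℕ)) (pow_ne_zero _ hεne)
  have hD : ∀ v (j : Fin n), D v j = ε ^ (j : ℕ) * v j := fun v j => rfl
  refine ⟨e.symm.trans (D.trans e), ?_, ?_⟩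
  · intro f
    have happ : ∀ x, (e.symm.trans (D.trans e)) x = e (D (e.symm x)) := fun x => rfl
    set w := e.symm (Ideal.Quotient.mk (itoNak n i a b) f) with hw
    have hev : psi n i a b w = Ideal.Quotient.mk (itoNak n i a b) f := by
      rw [← he]; exact e.apply_symm_apply _
    rw [psi_apply] at hev
    set S : MvPolynomial (Fin 2) ℂ :=
      Finset.univ.sum (fun k => w k • monomial (em n i k) 1) with hS
    have hsub : S - f ∈ itoNak n i a b := Ideal.Quotient.eq.1 hev
    have hsub2 : sigmaA ε S - sigmaA ε f ∈ itoNak n i a b := by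
      rw [← map_sub]
      exact sigma_ideal n i hn h2 a b ε hε1 hsub
    have hmk2 : Ideal.Quotient.mk (itoNak n i a b) (sigmaA ε f)
        = Ideal.Quotient.mk (itoNak n i a b) (sigmaA ε S) :=
      (Ideal.Quotient.eq.2 hsub2).symm
    rw [happ, hmk2, ← hw]
    -- now: e (D w) = mk (sigmaA ε S)
    rw [he, psi_apply]
    congr 1
    rw [hS, map_sum]
    refine Finset.sum_congr rfl fun k _ => ?_
    rw [map_smul, sigma_mono n i hn h2 ε hε1 k, hD, smul_smul,
      mul_comm (ε ^ (k : ℕ)) (w k)]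
  · intro k hk
    have hkn : k < n := by omega
    -- eigenspace transfer
    have heig : Module.End.eigenspace (e.symm.trans (D.trans e)).toLinearMap (ε ^ k) =
        (Module.End.eigenspace D.toLinearMap (ε ^ k)).map
          (e : (Fin n → ℂ) →ₗ[ℂ] (MvPolynomial (Fin 2) ℂ ⧸ itoNak n i a b)) := by
      ext x
      rw [Module.End.mem_eigenspace_iff, Submodule.mem_map_equiv,
        Module.End.mem_eigenspace_iff]
      have happ : (e.symm.trans (D.trans e)).toLinearMap x = e (D (e.symm x)) := rfl
      rw [happ]
      constructor
      · intro hx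
        have h1 : D (e.symm x) = e.symm (ε ^ k • x) := by
          rw [← hx, LinearEquiv.symm_apply_apply]
        show D (e.symm x) = ε ^ k • e.symm x
        rw [h1, map_smul]
      · intro hx
        show e (D (e.symm x)) = ε ^ k • x
        have h1 : D (e.symm x) = ε ^ k • e.symm x := hx
        rw [h1, map_smul, LinearEquiv.apply_symm_apply]
    rw [heig]
    rw [← LinearEquiv.finrank_eq (Submodule.equivMapOfInjective
      (e : (Fin n → ℂ) →ₗ[ℂ] (MvPolynomial (Fin 2) ℂ ⧸ itoNak n i a b)) e.injective (Module.End.eigenspace D.toLinearMap (ε ^ k)))]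
    -- compute the eigenspace of D
    have hD' : ∀ (v : Fin n → ℂ) (j : Fin n),
        D.toLinearMap v j = ε ^ (j : ℕ) * v j := fun v j => rfl
    have hDeig : Module.End.eigenspace D.toLinearMap (ε ^ k) =
        Submodule.span ℂ {Pi.single (⟨k, hkn⟩ : Fin n) (1 : ℂ)} := by
      ext v
      rw [Module.End.mem_eigenspace_iff, Submodule.mem_span_singleton]
      constructor
      · intro h
        refine ⟨v ⟨k, hkn⟩, ?_⟩
        funext j
        by_cases hj : j = ⟨k, hkn⟩
        · subst hj
          rw [Pi.smul_apply, Pi.single_eq_same, smul_eq_mul, mul_one]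
        · rw [Pi.smul_apply, Pi.single_eq_of_ne hj, smul_zero]
          have hje := congrFun h j
          have hje2 : ε ^ (j : ℕ) * v j = ε ^ k * v j := hje
          by_contra hv
          have hne : (ε ^ (j : ℕ)) ≠ ε ^ k := fun hEq =>
            hj (Fin.ext (hε.pow_inj j.isLt hkn hEq))
          exact hne (mul_right_cancel₀ (Ne.symm hv) hje2)
      · rintro ⟨c, rfl⟩
        funext j
        rw [hD']
        by_cases hj : j = ⟨k, hkn⟩
        · subst hj
          simp
        · rw [Pi.smul_apply, Pi.single_eq_of_ne hj, Pi.smul_apply, Pi.smul_apply,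
            Pi.single_eq_of_ne hj]
          simp
    rw [hDeig]
    refine finrank_span_singleton ?_
    intro hEq
    have := congrFun hEq ⟨k, hkn⟩
    rw [Pi.single_eq_same] at this
    exact one_ne_zero this

lemma ideal_eq (n i : ℕ) (h1 : 1 ≤ i) (h2 : i ≤ n - 1) (hn : 2 ≤ n) (a : ℂ) (ha : a ≠ 0) :
    itoNak n i a 0 = itoNak n (i - 1) 0 1 := by
  have hi : i - 1 + 1 = i := by omega
  have he : n - (i - 1) = n + 1 - i := by omega
  have he2 : n + 1 - (i - 1) = (n + 1 - i) + 1 := by omega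
  unfold itoNak
  apply le_antisymm <;> rw [Ideal.span_le] <;> rintro x hx <;>
    simp only [Set.mem_insert_iff, Set.mem_singleton_iff] at hx
  · rcases hx with rfl | rfl | rfl | rfl
    · have : (C a * X 0 ^ i - C 0 * X 1 ^ (n - i) : MvPolynomial (Fin 2) ℂ)
          = C a * X 0 ^ (i - 1 + 1) := by
        rw [map_zero, zero_mul, sub_zero, hi]
      rw [this]
      exact Ideal.mul_mem_left _ _ (Ideal.subset_span (by simp))
    · have : (X 0 ^ (i + 1) : MvPolynomial (Fin 2) ℂ) = X 0 * X 0 ^ (i - 1 + 1) := by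
        rw [hi, pow_succ']
      rw [this]
      exact Ideal.mul_mem_left _ _ (Ideal.subset_span (by simp))
    · exact Ideal.subset_span (by simp)
    · have : (X 1 ^ (n + 1 - i) : MvPolynomial (Fin 2) ℂ)
          = -(C 0 * X 0 ^ (i - 1) - C 1 * X 1 ^ (n - (i - 1))) := by
        rw [he, map_zero, zero_mul, map_one, one_mul, zero_sub, neg_neg]
      rw [this]
      exact Submodule.neg_mem _ (Ideal.subset_span (by simp))
  · rcases hx with rfl | rfl | rfl | rfl
    · have : (C 0 * X 0 ^ (i - 1) - C 1 * X 1 ^ (n - (i - 1)) : MvPolynomial (Fin 2) ℂ)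
          = -(X 1 ^ (n + 1 - i)) := by
        rw [he, map_zero, zero_mul, map_one, one_mul, zero_sub]
      rw [this]
      exact Submodule.neg_mem _ (Ideal.subset_span (by simp))
    · have : (X 0 ^ (i - 1 + 1) : MvPolynomial (Fin 2) ℂ)
          = C a⁻¹ * (C a * X 0 ^ i - C 0 * X 1 ^ (n - i)) := by
        rw [hi, map_zero, zero_mul, sub_zero, ← mul_assoc, ← C_mul,
          inv_mul_cancel₀ ha, C_1, one_mul]
      rw [this]
      exact Ideal.mul_mem_left _ _ (Ideal.subset_span (by simp))
    · exact Ideal.subset_span (by simp)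
    · have : (X 1 ^ (n + 1 - (i - 1)) : MvPolynomial (Fin 2) ℂ)
          = X 1 * X 1 ^ (n + 1 - i) := by
        rw [he2, pow_succ']
      rw [this]
      exact Ideal.mul_mem_left _ _ (Ideal.subset_span (by simp))

end INaux

/-- `σ` descends to a `ℂ`-linear automorphism of `ℂ[x,y]/I_i(a,b)` whose
eigenspace for each eigenvalue `εᵏ`, `0 ≤ k ≤ n−1`, is one-dimensional. -/
theorem itoNak_regular_representation (n i : ℕ) (h1 : 1 ≤ i) (h2 : i ≤ n - 1)
    (a b : ℂ) (hab : ¬(a = 0 ∧ b = 0)) (ε : ℂ) (hε : IsPrimitiveRoot ε n) :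
    ∃ σbar : (MvPolynomial (Fin 2) ℂ ⧸ itoNak n i a b) ≃ₗ[ℂ]
        (MvPolynomial (Fin 2) ℂ ⧸ itoNak n i a b),
      (∀ f : MvPolynomial (Fin 2) ℂ,
        σbar (Ideal.Quotient.mk (itoNak n i a b) f) =
          Ideal.Quotient.mk (itoNak n i a b) (sigmaA ε f)) ∧
      ∀ k : ℕ, k ≤ n - 1 →
        Module.finrank ℂ (Module.End.eigenspace (σbar.toLinearMap) (ε ^ k)) = 1 := by
  have hn : 2 ≤ n := by omega
  by_cases hb : b = 0
  · have ha : a ≠ 0 := fun h => hab ⟨h, hb⟩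
    subst hb
    rw [INaux.ideal_eq n i h1 h2 hn a ha]
    exact INaux.core n (i - 1) hn (by omega) 0 1 one_ne_zero (Or.inr rfl) ε hε
  · exact INaux.core n i hn h2 a b hb (Or.inl h1) ε hε
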